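/- Let n be a positive integer and g a nonnegative integer with gcd(n,g)=1. Then the spectral norm of the g-circulant matrix C_{n,g}(L) with first row (L_1,L_2,…,L_n) equals L_{n+2} − 3. -/

import Mathlib

/-- The `g`-circulant matrix of size `n` with first row `(a 0, a 1, …, a (n-1))`:
its `(i,j)` entry (0-indexed) equals `a ((j - i*g) mod n)`. -/
def gCirc {α : Type*} (n g : ℕ) (a : ℕ → α) : Matrix (Fin n) (Fin n) α :=
  Matrix.of fun i j => a ((j.val + (n - (i.val * g) % n)) % n)

/-- The spectral norm (operator 2-norm) of a real square matrix. -/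
noncomputable def matSpectralNorm {n : ℕ} (A : Matrix (Fin n) (Fin n) ℝ) : ℝ :=
  ‖Matrix.toEuclideanCLM (𝕜 := ℝ) A‖

lemma lucas_one_le (L : ℕ → ℝ) (hL0 : L 0 = 2) (hL1 : L 1 = 1)
    (hrec : ∀ m : ℕ, L (m + 2) = L (m + 1) + L m) : ∀ m, 1 ≤ L m := by
  have key : ∀ m, 1 ≤ L m ∧ 1 ≤ L (m + 1) := by
    intro m
    induction m with
    | zero => constructor <;> simp [hL0, hL1]
    | succ k ih => exact ⟨ih.2, by rw [hrec]; linarith [ih.1, ih.2]⟩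
  exact fun m => (key m).1

lemma lucas_sum (L : ℕ → ℝ) (hL0 : L 0 = 2) (hL1 : L 1 = 1)
    (hrec : ∀ m : ℕ, L (m + 2) = L (m + 1) + L m) (n : ℕ) :
    ∑ k ∈ Finset.range n, L (k + 1) = L (n + 2) - 3 := by
  induction n with
  | zero => simp [hrec 0, hL0, hL1]; norm_num
  | succ k ih =>
      rw [Finset.sum_range_succ, ih]
      have h := hrec (k + 1)
      have : k + 1 + 2 = k + 3 := by ring
      rw [this] at h ⊢
      have : k + 1 + 1 = k + 2 := by ring
      rw [this] at h
      linarith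

/-- Spectral norm of the g-circulant matrix of Lucas numbers. -/
theorem spectralNorm_gCirc_lucas
    (L : ℕ → ℝ) (hL0 : L 0 = 2) (hL1 : L 1 = 1)
    (hrec : ∀ m : ℕ, L (m + 2) = L (m + 1) + L m)
    (n r : ℕ) (hn : 0 < n) (hgcd : Nat.gcd n r = 1) :
    matSpectralNorm (gCirc n r (fun m => L (m + 1))) = L (n + 2) - 3 := by
  haveI : NeZero n := ⟨hn.ne'⟩
  have hL : ∀ m, 1 ≤ L m := lucas_one_le L hL0 hL1 hrec
  set A : Matrix (Fin n) (Fin n) ℝ := gCirc n r (fun m => L (m + 1)) with hA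
  set S : ℝ := ∑ k ∈ Finset.range n, L (k + 1) with hSdef
  set f : ZMod n → ℝ := fun x => L (x.val + 1) with hf
  -- index computation
  have hidx : ∀ i j : Fin n,
      A i j = f ((j.val : ZMod n) - (i.val : ZMod n) * (r : ZMod n)) := by
    intro i j
    have h1 : (i.val * r) % n ≤ n := (Nat.mod_lt _ hn).le
    have hcast : ((j.val + (n - (i.val * r) % n) : ℕ) : ZMod n)
        = (j.val : ZMod n) - (i.val : ZMod n) * (r : ZMod n) := by
      rw [Nat.cast_add, Nat.cast_sub h1, ZMod.natCast_self, ZMod.natCast_mod,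
        Nat.cast_mul]
      ring
    show L (((j.val + (n - (i.val * r) % n)) % n) + 1) = _
    rw [hf]
    simp only
    rw [← hcast, ZMod.val_natCast]
  -- equivalence between Fin n and ZMod n
  let eFZ : Fin n ≃ ZMod n :=
    { toFun := fun k => (k.val : ZMod n)
      invFun := fun x => ⟨x.val, ZMod.val_lt x⟩
      left_inv := fun k => by
        apply Fin.ext
        simp [ZMod.val_natCast, Nat.mod_eq_of_lt k.isLt]
      right_inv := fun x => ZMod.natCast_rightInverse x }
  have hsumZ : ∑ x : ZMod n, f x = S := by
    rw [hSdef, ← Fin.sum_univ_eq_sum_range (fun k => L (k + 1)) n]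
    symm
    apply Fintype.sum_equiv eFZ
    intro k
    simp only [hf, eFZ, Equiv.coe_fn_mk, ZMod.val_natCast,
      Nat.mod_eq_of_lt k.isLt]
  -- sums over shifted arguments
  have hshift : ∀ c : ZMod n, ∑ x : ZMod n, f (x - c) = S := by
    intro c
    rw [← hsumZ]
    exact Fintype.sum_equiv (Equiv.subRight c) _ f (fun x => rfl)
  have hsubleft : ∀ d : ZMod n, ∑ x : ZMod n, f (d - x) = S := by
    intro d
    rw [← hsumZ]
    exact Fintype.sum_equiv (Equiv.subLeft d) _ f (fun x => rfl)
  -- the unit r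
  have hcop : Nat.Coprime r n := Nat.coprime_comm.mp hgcd
  set u : (ZMod n)ˣ := ZMod.unitOfCoprime r hcop with hu
  have hur : (u : ZMod n) = (r : ℕ) := ZMod.coe_unitOfCoprime r hcop
  have hmul : ∀ d : ZMod n, ∑ x : ZMod n, f (d - x * (r : ZMod n)) = S := by
    intro d
    rw [← hsubleft d]
    refine Fintype.sum_equiv (Units.mulRight u) _ _ (fun x => ?_)
    simp [Units.mulRight, hur]
  -- row and column sums
  have hrow : ∀ i : Fin n, ∑ j : Fin n, A i j = S := by
    intro i
    simp_rw [hidx]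
    rw [← hshift ((i.val : ZMod n) * (r : ZMod n))]
    exact Fintype.sum_equiv eFZ _ _ (fun j => rfl)
  have hcol : ∀ j : Fin n, ∑ i : Fin n, A i j = S := by
    intro j
    simp_rw [hidx]
    rw [← hmul (j.val : ZMod n)]
    refine Fintype.sum_equiv eFZ _ _ (fun i => ?_)
    simp [eFZ, sub_eq_add_neg]
  -- entries positivity
  have hA0 : ∀ i j, 0 ≤ A i j := by
    intro i j; rw [hidx]; exact le_trans zero_le_one (hL _)
  have hS0 : (0 : ℝ) ≤ S := by
    rw [hSdef]
    exact Finset.sum_nonneg fun k _ => le_trans zero_le_one (hL _)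
  -- the operator
  set T := Matrix.toEuclideanCLM (𝕜 := ℝ) A with hT
  -- lower bound
  set v : EuclideanSpace ℝ (Fin n) := (WithLp.equiv 2 _).symm (fun _ => (1 : ℝ))
    with hv
  have hTv : T v = S • v := by
    rw [hv, hT, (show ∀ y : Fin n → ℝ, Matrix.toEuclideanCLM (𝕜 := ℝ) A ((WithLp.equiv 2 (Fin n → ℝ)).symm y) = (WithLp.equiv 2 (Fin n → ℝ)).symm (Matrix.toLin' A y) from fun _ => rfl)]
    have : S • ((WithLp.equiv 2 (Fin n → ℝ)).symm (fun _ => (1 : ℝ)))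
        = (WithLp.equiv 2 (Fin n → ℝ)).symm (fun _ => S) := by
      apply (WithLp.equiv 2 (Fin n → ℝ)).injective
      funext i
      simp [WithLp.ofLp_smul]
    rw [this]
    congr 1
    funext i
    rw [Matrix.toLin'_apply]
    show ∑ j, A i j * 1 = S
    simp only [mul_one]
    exact hrow i
  have hvne : v ≠ 0 := by
    intro h
    have h2 := congrFun (congrArg (WithLp.equiv 2 (Fin n → ℝ)) h) ⟨0, hn⟩
    simp [hv] at h2
  have hlow : S ≤ ‖T‖ := by
    have h1 : ‖T v‖ = S * ‖v‖ := by
      rw [hTv, norm_smul, Real.norm_eq_abs, abs_of_nonneg hS0]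
    have h2 : ‖T v‖ ≤ ‖T‖ * ‖v‖ := T.le_opNorm v
    have hv0 : 0 < ‖v‖ := norm_pos_iff.mpr hvne
    rw [h1] at h2
    exact le_of_mul_le_mul_right h2 hv0
  -- upper bound
  have hup : ‖T‖ ≤ S := by
    refine ContinuousLinearMap.opNorm_le_bound T hS0 (fun w => ?_)
    set x : Fin n → ℝ := WithLp.equiv 2 _ w with hx
    have hwx : w = (WithLp.equiv 2 (Fin n → ℝ)).symm x := by simp [hx]
    have hTw : T w = (WithLp.equiv 2 (Fin n → ℝ)).symm (A.mulVec x) := by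
      rw [hwx, hT, (show ∀ y : Fin n → ℝ, Matrix.toEuclideanCLM (𝕜 := ℝ) A ((WithLp.equiv 2 (Fin n → ℝ)).symm y) = (WithLp.equiv 2 (Fin n → ℝ)).symm (Matrix.toLin' A y) from fun _ => rfl), Matrix.toLin'_apply]
    rw [hTw]
    have hnorm1 : ‖(WithLp.equiv 2 (Fin n → ℝ)).symm (A.mulVec x)‖
        = Real.sqrt (∑ i, (∑ j, A i j * x j) ^ 2) := by
      rw [EuclideanSpace.norm_eq]
      congr 1
      apply Finset.sum_congr rfl
      intro i _
      rw [Real.norm_eq_abs, sq_abs]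
      rfl
    have hnorm2 : ‖w‖ = Real.sqrt (∑ j, (x j) ^ 2) := by
      rw [hwx, EuclideanSpace.norm_eq]
      congr 1
      apply Finset.sum_congr rfl
      intro j _
      rw [Real.norm_eq_abs, sq_abs]
      rfl
    rw [hnorm1, hnorm2]
    rw [← Real.sqrt_sq hS0, ← Real.sqrt_mul (sq_nonneg S)]
    apply Real.sqrt_le_sqrt
    -- Cauchy-Schwarz per row
    have key : ∀ i : Fin n,
        (∑ j, A i j * x j) ^ 2 ≤ S * ∑ j, A i j * (x j) ^ 2 := by
      intro i
      have hcs := Finset.sum_mul_sq_le_sq_mul_sq Finset.univ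
        (fun j => Real.sqrt (A i j)) (fun j => Real.sqrt (A i j) * x j)
      have e1 : ∀ j : Fin n, Real.sqrt (A i j) * (Real.sqrt (A i j) * x j)
          = A i j * x j := by
        intro j
        rw [← mul_assoc, Real.mul_self_sqrt (hA0 i j)]
      have e2 : ∀ j : Fin n, (Real.sqrt (A i j)) ^ 2 = A i j :=
        fun j => Real.sq_sqrt (hA0 i j)
      have e3 : ∀ j : Fin n, (Real.sqrt (A i j) * x j) ^ 2
          = A i j * (x j) ^ 2 := by
        intro j
        rw [mul_pow, Real.sq_sqrt (hA0 i j)]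
      simp_rw [e1, e2, e3] at hcs
      rwa [hrow i] at hcs
    calc ∑ i, (∑ j, A i j * x j) ^ 2
        ≤ ∑ i, S * ∑ j, A i j * (x j) ^ 2 :=
          Finset.sum_le_sum fun i _ => key i
      _ = S * ∑ j, (∑ i, A i j) * (x j) ^ 2 := by
          rw [← Finset.mul_sum]
          congr 1
          rw [Finset.sum_comm]
          apply Finset.sum_congr rfl
          intro j _
          rw [Finset.sum_mul]
      _ = S ^ 2 * ∑ j, (x j) ^ 2 := by
          simp_rw [hcol]
          rw [← Finset.mul_sum]
          ring
  have : matSpectralNorm A = S := le_antisymm hup hlow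
  rw [this, hSdef, lucas_sum L hL0 hL1 hrec n]
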